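/- Let f̂(t) = cos(t/4) sin³(t/4)/(1 − 2cos(t/2))². Then as t → t* = 2π/3 from below, f̂(t) = 1/(4√3 (t* − t)²) − 1/(8(t* − t)) + O(1), and as t → 0⁺, f̂(t) = t³/64 + O(t⁵). -/

import Mathlib

open Real Filter Topology Asymptotics

set_option maxHeartbeats 2000000

private lemma mulb {x y a b : ℝ} (hx : |x| ≤ a) (hy : |y| ≤ b) : |x*y| ≤ a*b := by
  rw [abs_mul]; exact mul_le_mul hx hy (abs_nonneg _) ((abs_nonneg _).trans hx)

private lemma addb {x y a b : ℝ} (hx : |x| ≤ a) (hy : |y| ≤ b) : |x + y| ≤ a + b :=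
  (abs_add_le _ _).trans (add_le_add hx hy)

private lemma powb {x a : ℝ} (n : ℕ) (hx : |x| ≤ a) : |x^n| ≤ a^n := by
  rw [abs_pow]; exact pow_le_pow_left₀ (abs_nonneg _) hx n

private lemma key1 (sg C S r : ℝ) (h3 : r^2 = 3) (h0 : 0 ≤ sg) (h12 : sg ≤ 1/2)
    (hr0 : 0 ≤ r) (hr2 : r ≤ 2)
    (hC : |C - (1 - sg^2/2)| ≤ sg^4) (hS : |S - (sg - sg^3/6)| ≤ sg^4) :
    |16*r*sg^2*((r/2*C - S/2) * (1 - (C/2 + r/2*S)) / 4) - (1 - C - r*S)^2 + r*sg*(1 - C - r*S)^2| ≤ 30*sg^4 := by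
  obtain ⟨c, hc, hCeq⟩ : ∃ c, |c| ≤ sg^4 ∧ C = 1 - sg^2/2 + c := ⟨_, hC, by ring⟩
  obtain ⟨s, hs, hSeq⟩ : ∃ s, |s| ≤ sg^4 ∧ S = sg - sg^3/6 + s := ⟨_, hS, by ring⟩
  have hsq : sg^2 ≤ 1 := by nlinarith
  have hsg4 : sg^4 ≤ 1 := by nlinarith [sq_nonneg sg, hsq]
  have hc1 : |c| ≤ 1 := hc.trans hsg4
  have hs1 : |s| ≤ 1 := hs.trans hsg4
  have hsg : |sg| ≤ 1/2 := by rw [abs_of_nonneg h0]; exact h12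
  have hr : |r| ≤ 2 := by rw [abs_of_nonneg hr0]; exact hr2
  have hco0 : |((3/4) : ℝ)| ≤ (3/4) := by rw [abs_le]; constructor <;> norm_num
  have hco1 : |((-4/3) : ℝ)| ≤ (4/3) := by rw [abs_le]; constructor <;> norm_num
  have hco2 : |((-1/12) : ℝ)| ≤ (1/12) := by rw [abs_le]; constructor <;> norm_num
  have hco3 : |((1/12) : ℝ)| ≤ (1/12) := by rw [abs_le]; constructor <;> norm_num
  have hco4 : |((-1) : ℝ)| ≤ 1 := by rw [abs_le]; constructor <;> norm_num
  have hco5 : |((-2) : ℝ)| ≤ 2 := by rw [abs_le]; constructor <;> norm_num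
  have hco6 : |(6 : ℝ)| ≤ 6 := by rw [abs_le]; constructor <;> norm_num
  have hco7 : |(7 : ℝ)| ≤ 7 := by rw [abs_le]; constructor <;> norm_num
  have hco8 : |(1 : ℝ)| ≤ 1 := by rw [abs_le]; constructor <;> norm_num
  have hco9 : |((-3) : ℝ)| ≤ 3 := by rw [abs_le]; constructor <;> norm_num
  have hco10 : |((-8/3) : ℝ)| ≤ (8/3) := by rw [abs_le]; constructor <;> norm_num
  have hco11 : |(2 : ℝ)| ≤ 2 := by rw [abs_le]; constructor <;> norm_num
  have hco12 : |((1/3) : ℝ)| ≤ (1/3) := by rw [abs_le]; constructor <;> norm_num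
  have hco13 : |((-6) : ℝ)| ≤ 6 := by rw [abs_le]; constructor <;> norm_num
  have hco14 : |(3 : ℝ)| ≤ 3 := by rw [abs_le]; constructor <;> norm_num
  have hco15 : |(4 : ℝ)| ≤ 4 := by rw [abs_le]; constructor <;> norm_num
  have hA : |(3/4) + (3/4)*sg*r + (-4/3)*sg^2 + (-1/12)*sg^3*r + (1/12)*sg^4| ≤ (2 : ℝ) := ((addb (addb (addb (addb hco0 (mulb (mulb hco0 hsg) hr)) (mulb hco1 (powb 2 hsg))) (mulb (mulb hco2 (powb 3 hsg)) hr)) (mulb hco3 (powb 4 hsg)))).trans (by norm_num)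
  have hB : |(-1)*c + (-2)*s*r + (-2)*sg*r + 6*sg*s + 7*sg^2 + 1*sg*c*r + (-3)*sg^2*c + (-2)*sg^2*s*r + (-8/3)*sg^3*r + 2*sg^4 + (1/3)*sg^5*r| ≤ (16 : ℝ) := ((addb (addb (addb (addb (addb (addb (addb (addb (addb (addb (mulb hco4 hc1) (mulb (mulb hco5 hs1) hr)) (mulb (mulb hco5 hsg) hr)) (mulb (mulb hco6 hsg) hs1)) (mulb hco7 (powb 2 hsg))) (mulb (mulb (mulb hco8 hsg) hc1) hr)) (mulb (mulb hco9 (powb 2 hsg)) hc1)) (mulb (mulb (mulb hco5 (powb 2 hsg)) hs1) hr)) (mulb (mulb hco10 (powb 3 hsg)) hr)) (mulb hco11 (powb 4 hsg))) (mulb (mulb hco12 (powb 5 hsg)) hr))).trans (by norm_num)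
  have hD : |(-3)*s + (-6)*sg + 3*sg*s*r + 3*sg^2*r + 3*sg^2*s + 4*sg^3 + (-1)*sg^5| ≤ (12 : ℝ) := ((addb (addb (addb (addb (addb (addb (mulb hco9 hs1) (mulb hco13 hsg)) (mulb (mulb (mulb hco14 hsg) hs1) hr)) (mulb (mulb hco14 (powb 2 hsg)) hr)) (mulb (mulb hco14 (powb 2 hsg)) hs1)) (mulb hco15 (powb 3 hsg))) (mulb hco4 (powb 5 hsg)))).trans (by norm_num)
  have hid : 16*r*sg^2*((r/2*(1 - sg^2/2 + c) - (sg - sg^3/6 + s)/2) * (1 - ((1 - sg^2/2 + c)/2 + r/2*(sg - sg^3/6 + s))) / 4) - (1 - (1 - sg^2/2 + c) - r*(sg - sg^3/6 + s))^2 + r*sg*(1 - (1 - sg^2/2 + c) - r*(sg - sg^3/6 + s))^2 = sg^4*((3/4) + (3/4)*sg*r + (-4/3)*sg^2 + (-1/12)*sg^3*r + (1/12)*sg^4) + c*((-1)*c + (-2)*s*r + (-2)*sg*r + 6*sg*s + 7*sg^2 + 1*sg*c*r + (-3)*sg^2*c + (-2)*sg^2*s*r + (-8/3)*sg^3*r +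 2*sg^4 + (1/3)*sg^5*r) + s*((-3)*s + (-6)*sg + 3*sg*s*r + 3*sg^2*r + 3*sg^2*s + 4*sg^3 + (-1)*sg^5) := by
    linear_combination ((-1)*s^2 + (-2)*sg*s + 2*sg*c*s + 2*sg^2*c + 1*sg*s^2*r + 1*sg^2*s*r + 1*sg^2*s^2 + (-1)*sg^2*c^2 + (4/3)*sg^3*s + (1/3)*sg^4 + (-1)*sg^2*c*s*r + (-1)*sg^3*c*r + (2/3)*sg^4*c + (1/6)*sg^4*s*r + (1/3)*sg^5*r + (-1/3)*sg^5*s + (-4/9)*sg^6 + (1/6)*sg^5*c*r + (-1/18)*sg^7*r + (1/36)*sg^8) * h3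
  rw [hCeq, hSeq, hid]
  have hsg4' : |sg^4| ≤ sg^4 := le_of_eq (abs_of_nonneg (by positivity))
  calc |sg^4*((3/4) + (3/4)*sg*r + (-4/3)*sg^2 + (-1/12)*sg^3*r + (1/12)*sg^4) + c*((-1)*c + (-2)*s*r + (-2)*sg*r + 6*sg*s + 7*sg^2 + 1*sg*c*r + (-3)*sg^2*c + (-2)*sg^2*s*r + (-8/3)*sg^3*r + 2*sg^4 + (1/3)*sg^5*r) + s*((-3)*s + (-6)*sg + 3*sg*s*r + 3*sg^2*r + 3*sg^2*s + 4*sg^3 + (-1)*sg^5)|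
      ≤ sg^4*2 + (sg^4*16 + sg^4*12) :=
        (abs_add_le _ _).trans (add_le_add (addb (mulb hsg4' hA) (mulb hc hB)) (mulb hs hD))
        |>.trans_eq (by ring)
    _ ≤ 30*sg^4 := by nlinarith [pow_nonneg h0 4]

private lemma key2 (sg C S : ℝ) (h0 : 0 ≤ sg) (h14 : sg ≤ 1/4)
    (hC : |C - (1 - sg^2/2)| ≤ sg^4) (hS : |S - (sg - sg^3/6)| ≤ sg^4) :
    |C*S^3 - sg^3*(4*S^2 - 1)^2| ≤ 25*sg^5 := by
  obtain ⟨c, hc, hCeq⟩ : ∃ c, |c| ≤ sg^4 ∧ C = 1 - sg^2/2 + c := ⟨_, hC, by ring⟩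
  obtain ⟨s, hs, hSeq⟩ : ∃ s, |s| ≤ sg^4 ∧ S = sg - sg^3/6 + s := ⟨_, hS, by ring⟩
  have hsq : sg^2 ≤ 1 := by nlinarith
  have hsg4 : sg^4 ≤ 1 := by nlinarith [sq_nonneg sg, hsq]
  have hc1 : |c| ≤ 1 := hc.trans hsg4
  have hs1 : |s| ≤ 1 := hs.trans hsg4
  have hsg : |sg| ≤ 1/4 := by rw [abs_of_nonneg h0]; exact h14
  have hco0 : |(7 : ℝ)| ≤ 7 := by rw [abs_le]; constructor <;> norm_num
  have hco1 : |((-55/3) : ℝ)| ≤ (55/3) := by rw [abs_le]; constructor <;> norm_num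
  have hco2 : |((1171/108) : ℝ)| ≤ (1171/108) := by rw [abs_le]; constructor <;> norm_num
  have hco3 : |((-1151/432) : ℝ)| ≤ (1151/432) := by rw [abs_le]; constructor <;> norm_num
  have hco4 : |((8/27) : ℝ)| ≤ (8/27) := by rw [abs_le]; constructor <;> norm_num
  have hco5 : |((-1/81) : ℝ)| ≤ (1/81) := by rw [abs_le]; constructor <;> norm_num
  have hco6 : |(3 : ℝ)| ≤ 3 := by rw [abs_le]; constructor <;> norm_num
  have hco7 : |(1 : ℝ)| ≤ 1 := by rw [abs_le]; constructor <;> norm_num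
  have hco8 : |((-1/2) : ℝ)| ≤ (1/2) := by rw [abs_le]; constructor <;> norm_num
  have hco9 : |((-1) : ℝ)| ≤ 1 := by rw [abs_le]; constructor <;> norm_num
  have hco10 : |((1/12) : ℝ)| ≤ (1/12) := by rw [abs_le]; constructor <;> norm_num
  have hco11 : |((-1/216) : ℝ)| ≤ (1/216) := by rw [abs_le]; constructor <;> norm_num
  have hco12 : |(6 : ℝ)| ≤ 6 := by rw [abs_le]; constructor <;> norm_num
  have hco13 : |((27/2) : ℝ)| ≤ (27/2) := by rw [abs_le]; constructor <;> norm_num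
  have hco14 : |((-16) : ℝ)| ≤ 16 := by rw [abs_le]; constructor <;> norm_num
  have hco15 : |((-64) : ℝ)| ≤ 64 := by rw [abs_le]; constructor <;> norm_num
  have hco16 : |((-383/4) : ℝ)| ≤ (383/4) := by rw [abs_le]; constructor <;> norm_num
  have hco17 : |((-793/12) : ℝ)| ≤ (793/12) := by rw [abs_le]; constructor <;> norm_num
  have hco18 : |((32/3) : ℝ)| ≤ (32/3) := by rw [abs_le]; constructor <;> norm_num
  have hco19 : |(32 : ℝ)| ≤ 32 := by rw [abs_le]; constructor <;> norm_num
  have hco20 : |((767/24) : ℝ)| ≤ (767/24) := by rw [abs_le]; constructor <;> norm_num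
  have hco21 : |((-8/3) : ℝ)| ≤ (8/3) := by rw [abs_le]; constructor <;> norm_num
  have hco22 : |((-16/3) : ℝ)| ≤ (16/3) := by rw [abs_le]; constructor <;> norm_num
  have hA : |7 + (-55/3)*sg^2 + (1171/108)*sg^4 + (-1151/432)*sg^6 + (8/27)*sg^8 + (-1/81)*sg^10| ≤ (10 : ℝ) := ((addb (addb (addb (addb (addb hco0 (mulb hco1 (powb 2 hsg))) (mulb hco2 (powb 4 hsg))) (mulb hco3 (powb 6 hsg))) (mulb hco4 (powb 8 hsg))) (mulb hco5 (powb 10 hsg)))).trans (by norm_num)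
  have hB : |3*s^2 + 3*sg*s + 1*sg^2 + (-1/2)*sg^2*s^2 + (-1)*sg^3*s + (-1/2)*sg^4 + (1/12)*sg^5*s + (1/12)*sg^6 + (-1/216)*sg^8| ≤ (4 : ℝ) := ((addb (addb (addb (addb (addb (addb (addb (addb (mulb hco6 (powb 2 hs1)) (mulb (mulb hco6 hsg) hs1)) (mulb hco7 (powb 2 hsg))) (mulb (mulb hco8 (powb 2 hsg)) (powb 2 hs1))) (mulb (mulb hco9 (powb 3 hsg)) hs1)) (mulb hco8 (powb 4 hsg))) (mulb (mulb hco10 (powb 5 hsg)) hs1)) (mulb hco10 (powb 6 hsg))) (mulb hco11 (powb 8 hsg)))).trans (by norm_num)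
  have hD : |3*s + 3*sg + (-1/2)*sg*s^2 + 6*sg^2*s + (27/2)*sg^3 + (-16)*sg^2*s^3 + (-64)*sg^3*s^2 + (-383/4)*sg^4*s + (-793/12)*sg^5 + (32/3)*sg^5*s^2 + 32*sg^6*s + (767/24)*sg^7 + (-8/3)*sg^8*s + (-16/3)*sg^9 + (8/27)*sg^11| ≤ (8 : ℝ) := ((addb (addb (addb (addb (addb (addb (addb (addb (addb (addb (addb (addb (addb (addb (mulb hco6 hs1) (mulb hco6 hsg)) (mulb (mulb hco8 hsg) (powb 2 hs1))) (mulb (mulb hco12 (powb 2 hsg)) hs1)) (mulb hco13 (powb 3 hsg))) (mulb (mulb hco14 (powb 2 hsg)) (powb 3 hs1))) (mulb (mulb hco15 (powb 3 hsg)) (powb 2 hs1))) (mulb (mulb hco16 (powb 4 hsg)) hs1)) (mulb hco17 (powb 5 hsg))) (mulb (mulb hco18 (powb 5 hsg)) (powb 2 hs1))) (mulb (mulb hco19 (powb 6 hsg)) hs1)) (mulb hco20 (powb 7 hsg))) (mulb (mulb hco21 (powb 8 hsg)) hs1)) (mulb hco22 (powb 9 hsg))) (mulb hco4 (powb 11 hsg)))).trans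 (by norm_num)
  have hG : |1*s + 1*c*s| ≤ (2 : ℝ) := ((addb (mulb hco7 hs1) (mulb (mulb hco7 hc1) hs1))).trans (by norm_num)
  have hid : (1 - sg^2/2 + c)*(sg - sg^3/6 + s)^3 - sg^3*(4*(sg - sg^3/6 + s)^2 - 1)^2 = sg^5*(7 + (-55/3)*sg^2 + (1171/108)*sg^4 + (-1151/432)*sg^6 + (8/27)*sg^8 + (-1/81)*sg^10) + c*(sg*(3*s^2 + 3*sg*s + 1*sg^2 + (-1/2)*sg^2*s^2 + (-1)*sg^3*s + (-1/2)*sg^4 + (1/12)*sg^5*s + (1/12)*sg^6 + (-1/216)*sg^8)) + s*(sg*(3*s + 3*sg + (-1/2)*sg*s^2 + 6*sg^2*s + (27/2)*sg^3 + (-16)*sg^2*s^3 + (-64)*sg^3*s^2 + (-383/4)*sg^4*s + (-793/12)*sg^5 + (32/3)*sg^5*s^2 + 32*sg^6*s + (767/24)*sg^7 + (-8/3)*sg^8*s + (-16/3)*sg^9 + (8/27)*sg^11)) + s^2*(1*s + 1*c*s) := by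
    ring
  rw [hCeq, hSeq, hid]
  have hsg5' : |sg^5| ≤ sg^5 := le_of_eq (abs_of_nonneg (by positivity))
  have hsgr : |sg| ≤ sg := le_of_eq (abs_of_nonneg h0)
  have h8 : sg^4*(sg*4) + sg^4*(sg*8) ≤ 12*sg^5 := by nlinarith [pow_nonneg h0 5]
  have h9 : (sg^4)^2*2 ≤ 2*sg^5 := by nlinarith [pow_nonneg h0 5, pow_nonneg h0 8, pow_le_pow_of_le_one h0 (le_trans h14 (by norm_num)) (show (5:ℕ) ≤ 8 by norm_num)]
  calc |sg^5*(7 + (-55/3)*sg^2 + (1171/108)*sg^4 + (-1151/432)*sg^6 + (8/27)*sg^8 + (-1/81)*sg^10) + c*(sg*(3*s^2 + 3*sg*s + 1*sg^2 + (-1/2)*sg^2*s^2 + (-1)*sg^3*s + (-1/2)*sg^4 + (1/12)*sg^5*s + (1/12)*sg^6 + (-1/216)*sg^8)) + s*(sg*(3*s + 3*sg + (-1/2)*sg*s^2 + 6*sg^2*s + (27/2)*sg^3 + (-16)*sg^2*s^3 + (-64)*sg^3*s^2 + (-383/4)*sg^4*s + (-793/12)*sg^5 + (32/3)*sg^5*s^2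 + 32*sg^6*s + (767/24)*sg^7 + (-8/3)*sg^8*s + (-16/3)*sg^9 + (8/27)*sg^11)) + s^2*(1*s + 1*c*s)|
      ≤ (sg^5*10 + (sg^4*(sg*4) + sg^4*(sg*8))) + (sg^4)^2*2 :=
        (abs_add_le _ _).trans (add_le_add ((abs_add_le _ _).trans (add_le_add
          (addb (mulb hsg5' hA) (mulb hc (mulb hsgr hB))) (mulb hs (mulb hsgr hD))))
          (mulb (powb 2 hs) hG)) |>.trans_eq (by ring)
    _ ≤ 25*sg^5 := by nlinarith [pow_nonneg h0 5]

/-- Asymptotics of `fhat(t) = cos(t/4) sin³(t/4)/(1 − 2cos(t/2))²`: as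
`t → t* = 2π/3` from below, `fhat(t) = 1/(4√3 (t*−t)²) − 1/(8(t*−t)) + O(1)`,
and as `t → 0⁺`, `fhat(t) = t³/64 + O(t⁵)`. -/
theorem FRW_tortoise_generating_function_asymptotics (fhat : ℝ → ℝ)
    (hfhat : ∀ t : ℝ, fhat t = Real.cos (t / 4) * Real.sin (t / 4) ^ 3 /
      (1 - 2 * Real.cos (t / 2)) ^ 2) :
    ((fun t : ℝ => fhat t -
        (1 / (4 * Real.sqrt 3 * (2 * π / 3 - t) ^ 2) - 1 / (8 * (2 * π / 3 - t))))
      =O[𝓝[<] (2 * π / 3)] fun _ : ℝ => (1 : ℝ)) ∧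
      ((fun t : ℝ => fhat t - t ^ 3 / 64) =O[𝓝[>] 0] fun t : ℝ => t ^ 5) := by
  constructor
  · -- as t → (2π/3)⁻
    rw [isBigO_iff]
    refine ⟨2, ?_⟩
    have hmem : Set.Ioo (2*π/3 - 1) (2*π/3) ∈ 𝓝[<] (2*π/3) :=
      Ioo_mem_nhdsLT_of_mem ⟨by linarith [Real.pi_pos], le_rfl⟩
    filter_upwards [hmem] with t ht
    obtain ⟨ht1, ht2⟩ := ht
    obtain ⟨r, hrdef⟩ : ∃ r : ℝ, r = Real.sqrt 3 := ⟨_, rfl⟩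
    rw [← hrdef]
    have h3 : r^2 = 3 := by rw [hrdef]; exact Real.sq_sqrt (by norm_num)
    have hr0 : 0 ≤ r := hrdef ▸ Real.sqrt_nonneg 3
    have hr2 : r ≤ 2 := by nlinarith
    have hr17 : 173/100 ≤ r := by nlinarith
    obtain ⟨σ, hσdef⟩ : ∃ σ : ℝ, σ = (2*π/3 - t)/2 := ⟨_, rfl⟩
    have hσ0 : 0 < σ := by rw [hσdef]; linarith
    have hσ12 : σ ≤ 1/2 := by rw [hσdef]; linarith
    have hts : t/2 = π/3 - σ := by rw [hσdef]; ring
    have hst : 2 * π / 3 - t = 2*σ := by rw [hσdef]; ring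
    have hσ1 : |σ| ≤ 1 := by rw [abs_of_pos hσ0]; linarith
    have habs : |σ| = σ := abs_of_pos hσ0
    have hC' : |Real.cos σ - (1 - σ^2/2)| ≤ σ^4 := by
      refine (Real.cos_bound hσ1).trans ?_
      rw [habs]; linarith only [pow_nonneg hσ0.le 4]
    have hS' : |Real.sin σ - (σ - σ^3/6)| ≤ σ^4 := by
      refine (Real.sin_bound hσ1).trans ?_
      rw [habs]; linarith only [pow_nonneg hσ0.le 4, pow_le_pow_of_le_one hσ0.le (by linarith) (show (4:ℕ) ≤ 5 by norm_num)]
    have hnum : Real.cos (t / 4) * Real.sin (t / 4) ^ 3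
        = Real.sin (t/2)*(1 - Real.cos (t/2))/4 := by
      rw [show t/2 = 2*(t/4) by ring, Real.sin_two_mul, Real.cos_two_mul]
      linear_combination (Real.sin (t/4)*Real.cos (t/4)) * (Real.sin_sq_add_cos_sq (t/4))
    have hcos : Real.cos (t/2) = Real.cos σ/2 + r/2*Real.sin σ := by
      rw [hts, Real.cos_sub, Real.cos_pi_div_three, Real.sin_pi_div_three, ← hrdef]; ring
    have hsin : Real.sin (t/2) = r/2*Real.cos σ - Real.sin σ/2 := by
      rw [hts, Real.sin_sub, Real.cos_pi_div_three, Real.sin_pi_div_three, ← hrdef]; ring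
    have hd : 1 - 2 * Real.cos (t / 2) = 1 - Real.cos σ - r*Real.sin σ := by
      rw [hcos]; ring
    -- bound d below
    have h1 := abs_le.1 hC'
    have h2 := abs_le.1 hS'
    have p2 : σ^2 ≤ (1/2)*σ := by nlinarith
    have p3 : σ^3 ≤ (1/4)*σ := by
      have h := mul_le_mul_of_nonneg_left p2 hσ0.le
      nlinarith only [h, p2, hσ0]
    have p4 : σ^4 ≤ (1/8)*σ := by
      have h := mul_le_mul_of_nonneg_left p3 hσ0.le
      nlinarith only [h, p3, p2, hσ0]
    have e1 : (173/100)*σ ≤ r*σ := mul_le_mul_of_nonneg_right hr17 hσ0.le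
    have e2 : r*σ^3 ≤ 2*σ^3 := mul_le_mul_of_nonneg_right hr2 (pow_nonneg hσ0.le 3)
    have e3 : r*σ^4 ≤ 2*σ^4 := mul_le_mul_of_nonneg_right hr2 (pow_nonneg hσ0.le 4)
    have e4 : r*(σ - σ^3/6 - σ^4) ≤ r*Real.sin σ :=
      mul_le_mul_of_nonneg_left (by linarith [h2.1]) hr0
    have hdlb : 1 - Real.cos σ - r*Real.sin σ ≤ -σ := by
      linarith only [e4, e1, e2, e3, p2, p3, p4, h1.1, hσ0]
    have hd2 : σ^2 ≤ (1 - Real.cos σ - r*Real.sin σ)^2 := by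
      nlinarith only [hdlb, hσ0]
    have hdneg : 1 - Real.cos σ - r*Real.sin σ < 0 := lt_of_le_of_lt hdlb (by linarith)
    have hdne : 1 - Real.cos σ - r*Real.sin σ ≠ 0 := ne_of_lt hdneg
    have hσne : σ ≠ 0 := ne_of_gt hσ0
    have hrpos : (0:ℝ) < r := by linarith
    have hrne : r ≠ 0 := ne_of_gt hrpos
    have hσ2pos : (0:ℝ) < σ^2 := by positivity
    have hd2pos : (0:ℝ) < (1 - Real.cos σ - r*Real.sin σ)^2 := by linarith [hd2]
    have hden_pos : (0:ℝ) < 16*r*σ^2*(1 - Real.cos σ - r*Real.sin σ)^2 :=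
      mul_pos (mul_pos (by linarith) hσ2pos) hd2pos
    have hfin : (30*σ^4) / (16*σ^4) ≤ 2 := by
      rw [div_le_iff₀ (by positivity)]
      linarith only [pow_pos hσ0 4]
    have hge : 16*σ^4 ≤ 16*r*σ^2*(1 - Real.cos σ - r*Real.sin σ)^2 := by
      have t1 : σ^2*σ^2 ≤ σ^2*(1 - Real.cos σ - r*Real.sin σ)^2 :=
        mul_le_mul_of_nonneg_left hd2 (sq_nonneg σ)
      have t2 : σ^2*(1 - Real.cos σ - r*Real.sin σ)^2
          ≤ r*(σ^2*(1 - Real.cos σ - r*Real.sin σ)^2) :=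
        le_mul_of_one_le_left (by positivity) (by linarith)
      linarith only [t1, t2]
    have hP := key1 σ (Real.cos σ) (Real.sin σ) r h3 hσ0.le hσ12 hr0 hr2 hC' hS'
    rw [hfhat t, hnum, hd, hsin, hcos, hst]
    have hEeq : (r/2*Real.cos σ - Real.sin σ/2) * (1 - (Real.cos σ/2 + r/2*Real.sin σ)) / 4
          / (1 - Real.cos σ - r*Real.sin σ)^2
          - (1/(4*r*(2*σ)^2) - 1/(8*(2*σ)))
        = (16*r*σ^2*((r/2*Real.cos σ - Real.sin σ/2) * (1 - (Real.cos σ/2 + r/2*Real.sin σ)) / 4)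
            - (1 - Real.cos σ - r*Real.sin σ)^2 + r*σ*(1 - Real.cos σ - r*Real.sin σ)^2)
          / (16*r*σ^2*(1 - Real.cos σ - r*Real.sin σ)^2) := by
      field_simp
      ring
    rw [hEeq]
    simp only [Real.norm_eq_abs, norm_one, mul_one]
    rw [abs_div, abs_of_pos hden_pos]
    calc |16*r*σ^2*((r/2*Real.cos σ - Real.sin σ/2) * (1 - (Real.cos σ/2 + r/2*Real.sin σ)) / 4)
            - (1 - Real.cos σ - r*Real.sin σ)^2 + r*σ*(1 - Real.cos σ - r*Real.sin σ)^2|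
          / (16*r*σ^2*(1 - Real.cos σ - r*Real.sin σ)^2)
        ≤ (30*σ^4) / (16*σ^4) :=
          div_le_div₀ (by positivity) hP (by positivity) hge
      _ ≤ 2 := hfin
  · -- as t → 0⁺
    rw [isBigO_iff]
    refine ⟨1, ?_⟩
    have hmem : Set.Ioo (0:ℝ) 1 ∈ 𝓝[>] (0:ℝ) :=
      Ioo_mem_nhdsGT_of_mem ⟨le_rfl, one_pos⟩
    filter_upwards [hmem] with t ht
    obtain ⟨ht0, ht1⟩ := ht
    have hy0 : 0 < t/4 := by linarith
    have hy14 : t/4 ≤ 1/4 := by linarith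
    have hy1 : |t/4| ≤ 1 := by rw [abs_of_pos hy0]; linarith
    have habs : |t/4| = t/4 := abs_of_pos hy0
    have hC' : |Real.cos (t/4) - (1 - (t/4)^2/2)| ≤ (t/4)^4 := by
      refine (Real.cos_bound hy1).trans ?_
      rw [habs]; linarith only [pow_nonneg hy0.le 4]
    have hS' : |Real.sin (t/4) - (t/4 - (t/4)^3/6)| ≤ (t/4)^4 := by
      refine (Real.sin_bound hy1).trans ?_
      rw [habs]; linarith only [pow_nonneg hy0.le 4, pow_le_pow_of_le_one hy0.le (by linarith) (show (4:ℕ) ≤ 5 by norm_num)]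
    have hden_eq : 1 - 2 * Real.cos (t / 2) = 4*Real.sin (t/4)^2 - 1 := by
      rw [show t/2 = 2*(t/4) by ring, Real.cos_two_mul]
      linear_combination (-4) * (Real.sin_sq_add_cos_sq (t/4))
    have hsin_pos : 0 < Real.sin (t/4) :=
      Real.sin_pos_of_pos_of_lt_pi hy0 (by linarith [Real.pi_gt_three])
    have hsin_lt : Real.sin (t/4) < t/4 := Real.sin_lt hy0
    have hs2 : Real.sin (t/4)^2 ≤ 1/16 := by nlinarith only [hsin_pos, hsin_lt, hy14]
    have h34 : 3/4 ≤ 1 - 4*Real.sin (t/4)^2 := by linarith only [hs2]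
    have hden_lb : 9/16 ≤ (4*Real.sin (t/4)^2 - 1)^2 := by
      nlinarith only [h34, hs2, sq_nonneg (Real.sin (t/4))]
    have hden_pos : (0:ℝ) < (4*Real.sin (t/4)^2 - 1)^2 := by linarith [hden_lb]
    have hdne2 : (4*Real.sin (t/4)^2 - 1) ≠ 0 := ne_of_lt (by linarith only [hs2])
    have hfin2 : (25*(t/4)^5) / (9/16) ≤ 1*|t^5| := by
      rw [abs_of_pos (pow_pos ht0 5)]
      nlinarith only [pow_pos ht0 5]
    have hP := key2 (t/4) (Real.cos (t/4)) (Real.sin (t/4)) hy0.le hy14 hC' hS'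
    rw [hfhat t, hden_eq]
    have hEeq : Real.cos (t / 4) * Real.sin (t / 4) ^ 3 / (4*Real.sin (t/4)^2 - 1)^2 - t^3/64
        = (Real.cos (t/4)*Real.sin (t/4)^3 - (t/4)^3*(4*Real.sin (t/4)^2 - 1)^2)
          / (4*Real.sin (t/4)^2 - 1)^2 := by
      field_simp
      ring
    rw [hEeq]
    simp only [Real.norm_eq_abs]
    rw [abs_div, abs_of_pos hden_pos]
    calc |Real.cos (t/4)*Real.sin (t/4)^3 - (t/4)^3*(4*Real.sin (t/4)^2 - 1)^2|
          / (4*Real.sin (t/4)^2 - 1)^2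
        ≤ (25*(t/4)^5) / (9/16) :=
          div_le_div₀ (by positivity) hP (by norm_num) hden_lb
      _ ≤ 1*|t^5| := hfin2
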